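/- Let G be a tree on a finite vertex set V with |V| ≥ 2, let ij be an edge of G, let v be a new vertex not in V, and let G' be the graph on V ∪ {v} obtained from G by deleting edge ij and adding edges iv and vj. Extend f to v with f(v) > 0. Then there exists δ₀ ∈ (0,1) such that for every decay factor δ ∈ (δ₀, 1): (i) u_w(G') > u_w(G) for every w ∈ V; and (ii) if moreover Σ_{w ∈ V} f(w) > 2c, then u_v(G') > 0. -/
import Mathlib


open scoped Classical

/-- Agent `i`'s payoff in network `G`: sum over agents reachable from `i` of
`δ^(dist-1) * f j`, minus `c` times `i`'s degree. -/
noncomputable def payoff {V : Type*} [Fintype V] (G : SimpleGraph V)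
    (f : V → ℝ) (δ c : ℝ) (i : V) : ℝ :=
  (∑ j : V, if j ≠ i ∧ G.Reachable i j then δ ^ (G.dist i j - 1) * f j else 0)
    - c * (G.degree i : ℝ)

private lemma payoff_continuous {V : Type*} [Fintype V] (G : SimpleGraph V)
    (f : V → ℝ) (c : ℝ) (i : V) : Continuous fun δ : ℝ => payoff G f δ c i := by
  unfold payoff
  refine Continuous.sub ?_ continuous_const
  refine continuous_finset_sum _ fun j _ => ?_
  by_cases h : j ≠ i ∧ G.Reachable i j
  · simp only [if_pos h]; fun_prop
  · simp only [if_neg h]; exact continuous_const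

private lemma payoff_one {V : Type*} [Fintype V] (G : SimpleGraph V)
    (hpre : G.Preconnected) (f : V → ℝ) (c : ℝ) (i : V) :
    payoff G f 1 c i = (∑ j : V, f j) - f i - c * (G.degree i : ℝ) := by
  unfold payoff
  have key : ∀ j : V, (if j ≠ i ∧ G.Reachable i j then (1:ℝ) ^ (G.dist i j - 1) * f j else 0)
      = f j - (if j = i then f j else 0) := by
    intro j
    by_cases h : j = i
    · simp [h]
    · simp [h, hpre i j]
  rw [Finset.sum_congr rfl fun j _ => key j, Finset.sum_sub_distrib]
  simp [Finset.sum_ite_eq']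

/-- Inserting a new agent `v` (modelled as `none : Option V`) between the endpoints
`i`, `j` of an edge of a tree `G`: for `δ` close enough to `1`, every original
agent's payoff strictly increases, and the inserted agent's payoff is strictly
positive whenever the total value of the original agents exceeds `2c`. -/
theorem tree_insertion_improves_payoffs
    {V : Type*} [Fintype V] (G : SimpleGraph V) (htree : G.IsTree)
    (hcard : 2 ≤ Fintype.card V) (i j : V) (hadj : G.Adj i j)
    (f : V → ℝ) (hf : ∀ v, 0 < f v) (c : ℝ) (hc : 0 < c)
    (f' : Option V → ℝ) (hf'some : ∀ w : V, f' (some w) = f w) (hf'v : 0 < f' none)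
    (G' : SimpleGraph (Option V))
    (hG' : ∀ a b : Option V, G'.Adj a b ↔
      ((∃ x y : V, a = some x ∧ b = some y ∧ G.Adj x y ∧ s(x, y) ≠ s(i, j)) ∨
        (a = none ∧ (b = some i ∨ b = some j)) ∨
        (b = none ∧ (a = some i ∨ a = some j)))) :
    ∃ δ₀ : ℝ, 0 < δ₀ ∧ δ₀ < 1 ∧
      ∀ δ : ℝ, δ₀ < δ → δ < 1 →
        (∀ w : V, payoff G' f' δ c (some w) > payoff G f δ c w) ∧
        ((∑ w : V, f w) > 2 * c → payoff G' f' δ c none > 0) := by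
  classical
  have hij : i ≠ j := hadj.ne
  have hpre : G.Preconnected := htree.isConnected.preconnected
  -- clean adjacency characterizations in G'
  have hAss : ∀ x y : V, G'.Adj (some x) (some y) ↔ (G.Adj x y ∧ s(x, y) ≠ s(i, j)) := by
    intro x y
    rw [hG']
    constructor
    · rintro (⟨x', y', hx, hy, h, hs⟩ | ⟨h, _⟩ | ⟨h, _⟩)
      · obtain rfl : x = x' := Option.some_injective V hx
        obtain rfl : y = y' := Option.some_injective V hy
        exact ⟨h, hs⟩
      · exact absurd h (by simp)
      · exact absurd h (by simp)
    · rintro ⟨h, hs⟩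
      exact Or.inl ⟨x, y, rfl, rfl, h, hs⟩
  have hAsn : ∀ x : V, G'.Adj (some x) none ↔ (x = i ∨ x = j) := by
    intro x
    rw [hG']
    constructor
    · rintro (⟨x', y', _, hy, _, _⟩ | ⟨h, _⟩ | ⟨_, (h | h)⟩)
      · exact absurd hy (by simp)
      · exact absurd h (by simp)
      · exact Or.inl (Option.some_injective V h)
      · exact Or.inr (Option.some_injective V h)
    · rintro (rfl | rfl)
      · exact Or.inr (Or.inr ⟨rfl, Or.inl rfl⟩)
      · exact Or.inr (Or.inr ⟨rfl, Or.inr rfl⟩)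
  have hadj_none_i : G'.Adj none (some i) := ((hAsn i).mpr (Or.inl rfl)).symm
  have hadj_none_j : G'.Adj none (some j) := ((hAsn j).mpr (Or.inr rfl)).symm
  -- reachability transfer
  have hstep : ∀ x y : V, G.Adj x y → G'.Reachable (some x) (some y) := by
    intro x y hxy
    by_cases hs : s(x, y) = s(i, j)
    · rcases Sym2.eq_iff.mp hs with ⟨hx, hy⟩ | ⟨hx, hy⟩
      · subst hx; subst hy
        exact (hadj_none_i.symm.reachable).trans hadj_none_j.reachable
      · subst hx; subst hy
        exact (hadj_none_j.symm.reachable).trans hadj_none_i.reachable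
    · exact SimpleGraph.Adj.reachable ((hAss x y).mpr ⟨hxy, hs⟩)
  have hreach : ∀ x y : V, G.Reachable x y → G'.Reachable (some x) (some y) := by
    intro x y hxy
    obtain ⟨p⟩ := hxy
    induction p with
    | nil => exact SimpleGraph.Reachable.refl _
    | cons h p ih => exact (hstep _ _ h).trans ih
  have hpre' : G'.Preconnected := by
    intro a b
    have aux : ∀ a : Option V, G'.Reachable none a := by
      intro a
      cases a with
      | none => exact SimpleGraph.Reachable.refl _
      | some x => exact hadj_none_i.reachable.trans (hreach i x (hpre i x))
    exact (aux a).symm.trans (aux b)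
  -- degrees
  have hdeg_none : G'.degree none = 2 := by
    have hN : G'.neighborFinset none = {some i, some j} := by
      ext a
      cases a with
      | none => simp [G'.irrefl]
      | some y =>
        rw [SimpleGraph.mem_neighborFinset, SimpleGraph.adj_comm, hAsn y]
        simp
    rw [SimpleGraph.degree, hN]
    rw [Finset.card_insert_of_notMem (by
      simp only [Finset.mem_singleton, Option.some.injEq]; exact hij),
      Finset.card_singleton]
  have hmemij : ∀ x y : V, G.Adj x y → x ≠ i → x ≠ j → s(x, y) ≠ s(i, j) := by
    intro x y _ hxi hxj hs
    rcases Sym2.eq_iff.mp hs with ⟨h1, _⟩ | ⟨h1, _⟩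
    · exact hxi h1
    · exact hxj h1
  have hdeg_some : ∀ w : V, G'.degree (some w) = G.degree w := by
    intro w
    by_cases hwi : w = i
    · subst hwi
      have hN : G'.neighborFinset (some w) =
          insert none (((G.neighborFinset w).erase j).image some) := by
        ext a
        cases a with
        | none =>
          simp only [SimpleGraph.mem_neighborFinset, Finset.mem_insert, Finset.mem_image]
          constructor
          · intro _; exact Or.inl trivial
          · intro _; exact (hAsn w).mpr (Or.inl rfl)
        | some y =>
          rw [SimpleGraph.mem_neighborFinset, hAss w y]
          simp only [Finset.mem_insert, Finset.mem_image, Finset.mem_erase,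
            SimpleGraph.mem_neighborFinset, Option.some.injEq, reduceCtorEq, false_or]
          constructor
          · rintro ⟨hxy, hs⟩
            refine ⟨y, ⟨?_, hxy⟩, rfl⟩
            intro hyj; subst hyj
            exact hs rfl
          · rintro ⟨y', ⟨hyj, hxy⟩, rfl⟩
            refine ⟨hxy, ?_⟩
            intro hs
            rcases Sym2.eq_iff.mp hs with ⟨_, h2⟩ | ⟨h1, _⟩
            · exact hyj h2
            · exact hij h1
      rw [SimpleGraph.degree, hN,
        Finset.card_insert_of_notMem (by simp),
        Finset.card_image_of_injective _ (Option.some_injective V),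
        Finset.card_erase_of_mem (by simp [hadj]),
        Nat.sub_add_cancel (Finset.card_pos.mpr ⟨j, by simp [hadj]⟩)]
      rfl
    · by_cases hwj : w = j
      · subst hwj
        have hN : G'.neighborFinset (some w) =
            insert none (((G.neighborFinset w).erase i).image some) := by
          ext a
          cases a with
          | none =>
            simp only [SimpleGraph.mem_neighborFinset, Finset.mem_insert, Finset.mem_image]
            constructor
            · intro _; exact Or.inl trivial
            · intro _; exact (hAsn w).mpr (Or.inr rfl)
          | some y =>
            rw [SimpleGraph.mem_neighborFinset, hAss w y]
            simp only [Finset.mem_insert, Finset.mem_image, Finset.mem_erase,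
              SimpleGraph.mem_neighborFinset, Option.some.injEq, reduceCtorEq, false_or]
            constructor
            · rintro ⟨hxy, hs⟩
              refine ⟨y, ⟨?_, hxy⟩, rfl⟩
              intro hyi; subst hyi
              exact hs Sym2.eq_swap
            · rintro ⟨y', ⟨hyi, hxy⟩, rfl⟩
              refine ⟨hxy, ?_⟩
              intro hs
              rcases Sym2.eq_iff.mp hs with ⟨h1, _⟩ | ⟨_, h2⟩
              · exact hij h1.symm
              · exact hyi h2
        rw [SimpleGraph.degree, hN,
          Finset.card_insert_of_notMem (by simp),
          Finset.card_image_of_injective _ (Option.some_injective V),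
          Finset.card_erase_of_mem (by simp [hadj.symm]),
          Nat.sub_add_cancel (Finset.card_pos.mpr ⟨i, by simp [hadj.symm]⟩)]
        rfl
      · have hN : G'.neighborFinset (some w) = (G.neighborFinset w).image some := by
          ext a
          cases a with
          | none =>
            simp only [SimpleGraph.mem_neighborFinset, Finset.mem_image]
            constructor
            · intro h
              rcases (hAsn w).mp h with h | h
              · exact absurd h hwi
              · exact absurd h hwj
            · rintro ⟨y, _, h⟩; exact absurd h (by simp)
          | some y =>
            rw [SimpleGraph.mem_neighborFinset, hAss w y]
            simp only [Finset.mem_image, SimpleGraph.mem_neighborFinset, Option.some.injEq]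
            constructor
            · rintro ⟨hxy, _⟩
              exact ⟨y, hxy, rfl⟩
            · rintro ⟨y', hxy, rfl⟩
              exact ⟨hxy, hmemij w y' hxy hwi hwj⟩
        rw [SimpleGraph.degree, hN,
          Finset.card_image_of_injective _ (Option.some_injective V)]
        rfl
  -- payoffs at δ = 1
  have hsum' : (∑ a : Option V, f' a) = f' none + ∑ w : V, f w := by
    rw [Fintype.sum_option]
    congr 1
    exact Finset.sum_congr rfl fun w _ => hf'some w
  have hD1 : ∀ w : V, payoff G' f' 1 c (some w) - payoff G f 1 c w = f' none := by
    intro w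
    rw [payoff_one G' hpre' f' c (some w), payoff_one G hpre f c w, hsum', hf'some,
      hdeg_some w]
    ring
  have hψ1 : payoff G' f' 1 c none = (∑ w : V, f w) - 2 * c := by
    rw [payoff_one G' hpre' f' c none, hsum', hdeg_none]
    push_cast
    ring
  -- continuity and eventual positivity near δ = 1
  have hevD : ∀ᶠ δ in nhds (1:ℝ), ∀ w : V,
      payoff G f δ c w < payoff G' f' δ c (some w) := by
    rw [Filter.eventually_all]
    intro w
    have hcont : Continuous fun δ : ℝ =>
        payoff G' f' δ c (some w) - payoff G f δ c w :=
      (payoff_continuous G' f' c (some w)).sub (payoff_continuous G f c w)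
    have h0 : (0:ℝ) < payoff G' f' 1 c (some w) - payoff G f 1 c w := by
      rw [hD1 w]; exact hf'v
    have := hcont.continuousAt.eventually (eventually_gt_nhds h0)
    filter_upwards [this] with δ hδ
    linarith [hδ]
  have hevψ : ∀ᶠ δ in nhds (1:ℝ),
      ((∑ w : V, f w) > 2 * c → payoff G' f' δ c none > 0) := by
    by_cases hS : (∑ w : V, f w) > 2 * c
    · have h0 : (0:ℝ) < payoff G' f' 1 c none := by rw [hψ1]; linarith
      have := (payoff_continuous G' f' c none).continuousAt.eventually
        (eventually_gt_nhds h0)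
      filter_upwards [this] with δ hδ _
      exact hδ
    · exact Filter.Eventually.of_forall fun δ h => absurd h hS
  obtain ⟨ε, hε, hball⟩ := Metric.eventually_nhds_iff.mp (hevD.and hevψ)
  refine ⟨max (1 - ε) (1/2), by positivity, ?_, ?_⟩
  · apply max_lt <;> linarith
  · intro δ hδ₀ hδ1
    have h1 : 1 - ε < δ := lt_of_le_of_lt (le_max_left _ _) hδ₀
    have hd : dist δ 1 < ε := by
      rw [Real.dist_eq, abs_lt]
      constructor <;> linarith
    exact hball hd
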